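/- Let 𝒞₀ ⊆ ℝ^{n_x×n_h} be such that {Δ⊤ : Δ ∈ 𝒞₀} is a matrix ellipsoid, let K ∈ ℝ^{n_u×n_x}, and suppose there exists a symmetric matrix P ≻ 0 such that (Δ [I_{n_x}; K])⊤ P (Δ [I_{n_x}; K]) − P ≺ 0 for every Δ ∈ 𝒞₀. Let V₀ ⊆ ℝ^{n_x} be a bounded set and e₀ ∈ ℝ^{n_x}. Define E_0 := {e₀} and, for i ≥ 0, E_{i+1} := {Δ [I_{n_x}; K] e + v : Δ ∈ 𝒞₀, e ∈ E_i, v ∈ V₀}. Then there exists a bounded set E* ⊆ ℝ^{n_x} such that E_i ⊆ E* for all i ≥ 0. -/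

import Mathlib

open Matrix

/-- `S` is a matrix ellipsoid: for some symmetric `E ≻ 0`, `F`, and symmetric `G` with
`FᵀE⁻¹F − G ≻ 0`, `S = {Z : ZᵀEZ + ZᵀF + FᵀZ + G ⪯ 0}`. -/
def IsMatrixEllipsoid {p q : Type*} [Fintype p] [Fintype q] [DecidableEq p]
    (S : Set (Matrix p q ℝ)) : Prop :=
  ∃ (E : Matrix p p ℝ) (F : Matrix p q ℝ) (G : Matrix q q ℝ),
    E.IsHermitian ∧ G.IsHermitian ∧ E.PosDef ∧ (Fᵀ * E⁻¹ * F - G).PosDef ∧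
    S = {Z | (-(Zᵀ * E * Z + Zᵀ * F + Fᵀ * Z + G)).PosSemidef}


lemma abs_dotProduct_le' {n : Type*} [Fintype n] (a b : n → ℝ) :
    |a ⬝ᵥ b| ≤ (Fintype.card n : ℝ) * (‖a‖ * ‖b‖) := by
  calc |a ⬝ᵥ b| ≤ ∑ i, |a i * b i| := Finset.abs_sum_le_sum_abs _ _
    _ ≤ ∑ _i : n, ‖a‖ * ‖b‖ := by
        refine Finset.sum_le_sum fun i _ => ?_
        rw [abs_mul, ← Real.norm_eq_abs (a i), ← Real.norm_eq_abs (b i)]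
        exact mul_le_mul (norm_le_pi_norm a i) (norm_le_pi_norm b i) (norm_nonneg _)
          (norm_nonneg _)
    _ = (Fintype.card n : ℝ) * (‖a‖ * ‖b‖) := by
        rw [Finset.sum_const, Finset.card_univ, nsmul_eq_mul]

lemma quad_lb {n : Type*} [Fintype n] [Nonempty n] (M : Matrix n n ℝ) (hM : M.PosDef) :
    ∃ c > 0, ∀ v : n → ℝ, c * ‖v‖ ^ 2 ≤ v ⬝ᵥ (M *ᵥ v) := by
  have hcont : Continuous fun v : n → ℝ => v ⬝ᵥ (M *ᵥ v) :=
    continuous_id.dotProduct (continuous_const.matrix_mulVec continuous_id)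
  have hsph : IsCompact (Metric.sphere (0 : n → ℝ) 1) := isCompact_sphere _ _
  have hne : (Metric.sphere (0 : n → ℝ) 1).Nonempty :=
    NormedSpace.sphere_nonempty.mpr zero_le_one
  obtain ⟨u0, hu0, hmin⟩ := hsph.exists_isMinOn hne hcont.continuousOn
  have hu0norm : ‖u0‖ = 1 := by simpa using hu0
  have hu0ne : u0 ≠ 0 := by
    intro h; rw [h, norm_zero] at hu0norm; exact one_ne_zero hu0norm.symm
  have hc : 0 < u0 ⬝ᵥ (M *ᵥ u0) := by
    have := hM.dotProduct_mulVec_pos hu0ne; simpa using this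
  refine ⟨_, hc, fun v => ?_⟩
  rcases eq_or_ne v 0 with rfl | hv
  · simp
  · have hnv : (0:ℝ) < ‖v‖ := norm_pos_iff.mpr hv
    have hu : (‖v‖⁻¹ • v) ∈ Metric.sphere (0 : n → ℝ) 1 := by
      simp [norm_smul, abs_of_pos (inv_pos.mpr hnv), inv_mul_cancel₀ hnv.ne']
    have h1 := isMinOn_iff.mp hmin _ hu
    have h2 : (‖v‖⁻¹ • v) ⬝ᵥ (M *ᵥ (‖v‖⁻¹ • v)) = ‖v‖⁻¹ * (‖v‖⁻¹ * (v ⬝ᵥ (M *ᵥ v))) := by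
      rw [Matrix.mulVec_smul, smul_dotProduct, dotProduct_smul]
      simp [smul_eq_mul]
    rw [h2] at h1
    have h3 : (u0 ⬝ᵥ (M *ᵥ u0)) * ‖v‖ ^ 2 ≤ (‖v‖⁻¹ * (‖v‖⁻¹ * (v ⬝ᵥ (M *ᵥ v)))) * ‖v‖ ^ 2 :=
      mul_le_mul_of_nonneg_right h1 (sq_nonneg _)
    have h4 : (‖v‖⁻¹ * (‖v‖⁻¹ * (v ⬝ᵥ (M *ᵥ v)))) * ‖v‖ ^ 2 = v ⬝ᵥ (M *ᵥ v) := by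
      field_simp
    linarith

lemma IsMatrixEllipsoid.isCompact {p q : Type*} [Fintype p] [Fintype q] [DecidableEq p]
    [DecidableEq q] [Nonempty p] {S : Set (Matrix p q ℝ)} (h : IsMatrixEllipsoid S) :
    IsCompact S := by
  obtain ⟨E, F, G, hE, hG, hEpd, hcond, rfl⟩ := h
  set M : Matrix p q ℝ → Matrix q q ℝ := fun Z => -(Zᵀ * E * Z + Zᵀ * F + Fᵀ * Z + G) with hMdef
  have hMcont : Continuous M := by
    have hid : Continuous fun Z : Matrix p q ℝ => Z := continuous_id
    have h1 : Continuous fun Z : Matrix p q ℝ => Zᵀ * E * Z :=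
      (hid.matrix_transpose.matrix_mul continuous_const).matrix_mul hid
    have h2 : Continuous fun Z : Matrix p q ℝ => Zᵀ * F :=
      hid.matrix_transpose.matrix_mul continuous_const
    have h3 : Continuous fun Z : Matrix p q ℝ => Fᵀ * Z := continuous_const.matrix_mul hid
    exact (((h1.add h2).add h3).add continuous_const).neg
  have hclosed : IsClosed {Z : Matrix p q ℝ | (M Z).PosSemidef} := by
    have hset : {Z : Matrix p q ℝ | (M Z).PosSemidef} =
        {Z | (M Z)ᴴ = M Z} ∩ ⋂ x : q → ℝ, {Z | 0 ≤ star x ⬝ᵥ ((M Z) *ᵥ x)} := by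
      ext Z
      simp only [Set.mem_setOf_eq, Set.mem_inter_iff, Set.mem_iInter]
      exact posSemidef_iff_dotProduct_mulVec
    rw [hset]
    refine (isClosed_eq hMcont.matrix_conjTranspose hMcont).inter (isClosed_iInter fun x => ?_)
    exact isClosed_le continuous_const
      (continuous_const.dotProduct (hMcont.matrix_mulVec continuous_const))
  obtain ⟨cE, hcE, hElb⟩ := quad_lb E hEpd
  set C : q → ℝ := fun j =>
    (2 * (Fintype.card p : ℝ) * ‖F *ᵥ Pi.single j 1‖ +
      |Pi.single j 1 ⬝ᵥ (G *ᵥ Pi.single j 1)|) / cE + 1 with hCdef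
  have hbd : ∀ Z ∈ {Z : Matrix p q ℝ | (M Z).PosSemidef}, ∀ j : q,
      ‖Z *ᵥ Pi.single j 1‖ ≤ C j := by
    intro Z hZ j
    set x : q → ℝ := Pi.single j 1 with hxdef
    set w : p → ℝ := Z *ᵥ x with hwdef
    have t1 : x ⬝ᵥ ((Zᵀ * E * Z) *ᵥ x) = w ⬝ᵥ (E *ᵥ w) := by
      rw [← Matrix.mulVec_mulVec, ← Matrix.mulVec_mulVec, Matrix.dotProduct_mulVec,
        Matrix.vecMul_transpose]
    have t2 : x ⬝ᵥ ((Zᵀ * F) *ᵥ x) = w ⬝ᵥ (F *ᵥ x) := by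
      rw [← Matrix.mulVec_mulVec, Matrix.dotProduct_mulVec, Matrix.vecMul_transpose]
    have t3 : x ⬝ᵥ ((Fᵀ * Z) *ᵥ x) = w ⬝ᵥ (F *ᵥ x) := by
      rw [← Matrix.mulVec_mulVec, Matrix.dotProduct_mulVec, Matrix.vecMul_transpose,
        dotProduct_comm]
    have h0 := hZ.dotProduct_mulVec_nonneg x
    have h1 : w ⬝ᵥ (E *ᵥ w) + 2 * (w ⬝ᵥ (F *ᵥ x)) + x ⬝ᵥ (G *ᵥ x) ≤ 0 := by
      simp only [hMdef, Matrix.neg_mulVec, Matrix.add_mulVec, dotProduct_neg,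
        dotProduct_add, star_trivial] at h0
      rw [t1, t2, t3] at h0
      linarith
    have h2 : cE * ‖w‖ ^ 2 ≤ w ⬝ᵥ (E *ᵥ w) := hElb w
    have h3 : |w ⬝ᵥ (F *ᵥ x)| ≤ (Fintype.card p : ℝ) * (‖w‖ * ‖F *ᵥ x‖) :=
      abs_dotProduct_le' _ _
    have h3' := (abs_le.mp h3).1
    have hb'' := neg_abs_le (x ⬝ᵥ (G *ᵥ x))
    set aa : ℝ := 2 * (Fintype.card p : ℝ) * ‖F *ᵥ x‖ with haadef
    set bb : ℝ := |x ⬝ᵥ (G *ᵥ x)| with hbbdef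
    have haa : 0 ≤ aa := by positivity
    have hbb : 0 ≤ bb := abs_nonneg _
    set t : ℝ := ‖w‖ with htdef
    have ht0 : (0:ℝ) ≤ t := norm_nonneg _
    have hq : cE * t ^ 2 ≤ aa * t + bb := by
      have hring : 2 * ((Fintype.card p : ℝ) * (t * ‖F *ᵥ x‖)) = aa * t := by
        rw [haadef]; ring
      linarith [h1, h2, h3', hb'']
    have hCj : C j = (aa + bb) / cE + 1 := by rw [hCdef, haadef, hbbdef]
    rw [hCj]
    rcases le_or_gt t 1 with h1' | h1'
    · have : (0:ℝ) ≤ (aa + bb) / cE := div_nonneg (by linarith) hcE.le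
      linarith
    · have ht' : (0:ℝ) < t := lt_trans zero_lt_one h1'
      have hbt : bb ≤ bb * t := le_mul_of_one_le_right hbb h1'.le
      have h5 : (cE * t) * t ≤ (aa + bb) * t := by nlinarith
      have h6 : cE * t ≤ aa + bb := le_of_mul_le_mul_right h5 ht'
      have h7 : t ≤ (aa + bb) / cE := by
        rw [le_div_iff₀ hcE]; linarith
      linarith
  have hcomp : IsCompact ((Set.univ : Set p).pi fun _i : p =>
      (Set.univ : Set q).pi fun j : q => Set.Icc (-(C j)) (C j)) :=
    isCompact_univ_pi fun _i => isCompact_univ_pi fun j => isCompact_Icc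
  refine hcomp.of_isClosed_subset hclosed ?_
  intro Z hZ
  simp only [Set.mem_pi, Set.mem_univ, forall_true_left, Set.mem_Icc]
  intro i j
  have h := hbd Z hZ j
  have h2 : |(Z *ᵥ Pi.single j 1) i| ≤ ‖Z *ᵥ Pi.single j 1‖ := by
    rw [← Real.norm_eq_abs]; exact norm_le_pi_norm _ i
  have h3 : |Z i j| ≤ C j := by
    have h4 := h2.trans h
    have h5 : (Z *ᵥ Pi.single j 1) i = Z i j :=
      congrFun (Matrix.mulVec_single_one (Z : Matrix p q ℝ) j) i
    rw [← h5]; exact h4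
  exact abs_le.mp h3

/-- Let `𝒞₀` (transposed) be a matrix ellipsoid, `K` a feedback gain, and
suppose there is a symmetric `P ≻ 0` with `(Δ[I;K])ᵀ P (Δ[I;K]) − P ≺ 0` for all
`Δ ∈ 𝒞₀`. Let `V₀` be a bounded set, `E₀ = {e₀}` and
`E_{i+1} = {Δ[I;K]e + v : Δ ∈ 𝒞₀, e ∈ E_i, v ∈ V₀}`. Then there is a bounded set `E*`
containing every `E_i`. -/
theorem stmt18 (n_x n_u : ℕ) (hx : 0 < n_x) (hu : 0 < n_u)
    (C0 : Set (Matrix (Fin n_x) (Fin n_x ⊕ Fin n_u) ℝ))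
    (hC0 : IsMatrixEllipsoid ((fun Δ => Δᵀ) '' C0))
    (K : Matrix (Fin n_u) (Fin n_x) ℝ)
    (P : Matrix (Fin n_x) (Fin n_x) ℝ) (hP : P.PosDef)
    (hcontract : ∀ Δ ∈ C0,
      (P - (Δ * Matrix.fromRows 1 K)ᵀ * P * (Δ * Matrix.fromRows 1 K)).PosDef)
    (V0 : Set (Fin n_x → ℝ)) (hV0 : Bornology.IsBounded V0)
    (e0 : Fin n_x → ℝ)
    (E : ℕ → Set (Fin n_x → ℝ)) (hE0 : E 0 = {e0})
    (hEsucc : ∀ i, E (i + 1) =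
      {y | ∃ Δ ∈ C0, ∃ e ∈ E i, ∃ v ∈ V0, y = Δ.mulVec (Sum.elim e (K.mulVec e)) + v}) :
    ∃ Estar : Set (Fin n_x → ℝ), Bornology.IsBounded Estar ∧ ∀ i, E i ⊆ Estar := by
  classical
  haveI : Nonempty (Fin n_x) := ⟨⟨0, hx⟩⟩
  by_cases hCne : C0.Nonempty
  swap
  · refine ⟨{e0}, Bornology.isBounded_singleton, fun i => ?_⟩
    cases i with
    | zero => rw [hE0]
    | succ i =>
      intro y hy
      rw [hEsucc] at hy
      obtain ⟨Δ, hΔ, -⟩ := hy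
      exact absurd ⟨Δ, hΔ⟩ hCne
  -- C0 is compact
  have hC0cpt : IsCompact C0 := by
    have h1 : IsCompact ((fun Δ => Δᵀ) '' C0) := hC0.isCompact
    have hct : Continuous fun Z : Matrix (Fin n_x ⊕ Fin n_u) (Fin n_x) ℝ => Zᵀ :=
      Continuous.matrix_transpose continuous_id
    have h2 := h1.image hct
    have h3 : (fun Z : Matrix (Fin n_x ⊕ Fin n_u) (Fin n_x) ℝ => Zᵀ) ''
        ((fun Δ => Δᵀ) '' C0) = C0 := by
      rw [← Set.image_comp]
      simp [Function.comp_def]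
    rwa [h3] at h2
  set B : Matrix (Fin n_x ⊕ Fin n_u) (Fin n_x) ℝ := Matrix.fromRows 1 K with hBdef
  have hBe : ∀ e : Fin n_x → ℝ, B *ᵥ e = Sum.elim e (K *ᵥ e) := by
    intro e
    rw [hBdef, Matrix.fromRows_mulVec, Matrix.one_mulVec]
  -- square root of P
  have hPsd : P.PosSemidef := hP.posSemidef
  set Sq : Matrix (Fin n_x) (Fin n_x) ℝ := (open scoped MatrixOrder in CFC.sqrt P) with hSqdef
  have hSqmul : Sq * Sq = P := by
    open scoped MatrixOrder in exact CFC.sqrt_mul_sqrt_self P hPsd.nonneg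
  have hSqsymm : Sqᵀ = Sq := by
    have h := (open scoped MatrixOrder in (CFC.sqrt_nonneg P).posSemidef).1
    ext i j
    have := congrFun (congrFun h i) j
    simpa [Matrix.conjTranspose_apply] using this
  set L : (Fin n_x → ℝ) →L[ℝ] EuclideanSpace ℝ (Fin n_x) :=
    LinearMap.toContinuousLinearMap
      ((WithLp.linearEquiv 2 ℝ (Fin n_x → ℝ)).symm.toLinearMap ∘ₗ Sq.mulVecLin) with hLdef
  set N : (Fin n_x → ℝ) → ℝ := fun e => ‖L e‖ with hNdef
  have hL_apply : ∀ e : Fin n_x → ℝ, ∀ i, L e i = (Sq *ᵥ e) i := fun e i => rfl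
  have hN_sq : ∀ e : Fin n_x → ℝ, N e ^ 2 = e ⬝ᵥ (P *ᵥ e) := by
    intro e
    have h1 : N e ^ 2 = (inner ℝ (L e) (L e) : ℝ) := (real_inner_self_eq_norm_sq (L e)).symm
    have h2 : (inner ℝ (L e) (L e) : ℝ) = ∑ i, (Sq *ᵥ e) i * (Sq *ᵥ e) i := by
      rw [PiLp.inner_apply]
      simp [RCLike.inner_apply, hL_apply, sq]
    have h3 : ∑ i, (Sq *ᵥ e) i * (Sq *ᵥ e) i = (Sq *ᵥ e) ⬝ᵥ (Sq *ᵥ e) := rfl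
    have h4 : e ⬝ᵥ (P *ᵥ e) = (Sq *ᵥ e) ⬝ᵥ (Sq *ᵥ e) := by
      rw [← hSqmul, ← Matrix.mulVec_mulVec, Matrix.dotProduct_mulVec (v := e)]
      congr 1
      conv_lhs => rw [← hSqsymm]
      rw [Matrix.vecMul_transpose]
    rw [h1, h2, h3, h4]
  have hN0 : ∀ e : Fin n_x → ℝ, 0 ≤ N e := fun e => norm_nonneg _
  have hNpos : ∀ e : Fin n_x → ℝ, e ≠ 0 → 0 < N e := by
    intro e he
    have h1 : 0 < e ⬝ᵥ (P *ᵥ e) := by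
      have := hP.dotProduct_mulVec_pos (x := e) (by simpa using he)
      simpa using this
    rw [← hN_sq] at h1
    nlinarith [hN0 e]
  have hNsmul : ∀ (c : ℝ) (w : Fin n_x → ℝ), N (c • w) = |c| * N w := by
    intro c w
    have hmap : L (c • w) = c • L w := L.map_smul c w
    rw [hNdef]
    simp only []
    rw [hmap, norm_smul, Real.norm_eq_abs]
  have hNadd : ∀ w v : Fin n_x → ℝ, N (w + v) ≤ N w + N v := by
    intro w v
    rw [hNdef]
    simp only [map_add]
    exact norm_add_le _ _
  -- strict contraction pointwise
  have hstrict : ∀ Δ ∈ C0, ∀ e : Fin n_x → ℝ, e ≠ 0 → N ((Δ * B) *ᵥ e) < N e := by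
    intro Δ hΔ e he
    have h1 : 0 < e ⬝ᵥ ((P - (Δ * B)ᵀ * P * (Δ * B)) *ᵥ e) := by
      have := (hcontract Δ hΔ).dotProduct_mulVec_pos (x := e) (by simpa using he)
      rw [star_trivial] at this; exact this
    have h2 : e ⬝ᵥ (((Δ * B)ᵀ * P * (Δ * B)) *ᵥ e) = ((Δ * B) *ᵥ e) ⬝ᵥ (P *ᵥ ((Δ * B) *ᵥ e)) := by
      rw [← Matrix.mulVec_mulVec, ← Matrix.mulVec_mulVec, Matrix.dotProduct_mulVec (v := e),
        Matrix.vecMul_transpose]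
    rw [Matrix.sub_mulVec, dotProduct_sub, h2] at h1
    have h3 : N ((Δ * B) *ᵥ e) ^ 2 < N e ^ 2 := by
      rw [hN_sq, hN_sq]; linarith
    exact lt_of_pow_lt_pow_left₀ 2 (hN0 e) h3
  -- the contraction factor
  set sph := Metric.sphere (0 : Fin n_x → ℝ) 1 with hsphdef
  have hsphne : ∀ u ∈ sph, u ≠ 0 := by
    intro u hu h0
    rw [hsphdef, mem_sphere_zero_iff_norm] at hu
    rw [h0, norm_zero] at hu
    exact one_ne_zero hu.symm
  have hKc : IsCompact (C0 ×ˢ sph) := hC0cpt.prod (isCompact_sphere _ _)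
  have hKne : (C0 ×ˢ sph).Nonempty :=
    hCne.prod (NormedSpace.sphere_nonempty.mpr zero_le_one)
  have hNcont : Continuous N := L.continuous.norm
  have hφcont : ContinuousOn
      (fun pr : Matrix (Fin n_x) (Fin n_x ⊕ Fin n_u) ℝ × (Fin n_x → ℝ) =>
        N ((pr.1 * B) *ᵥ pr.2) / N pr.2) (C0 ×ˢ sph) := by
    apply ContinuousOn.div
    · exact (hNcont.comp
        ((continuous_fst.matrix_mul continuous_const).matrix_mulVec continuous_snd)).continuousOn
    · exact (hNcont.comp continuous_snd).continuousOn
    · rintro ⟨Δ, u⟩ hpr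
      exact (hNpos u (hsphne u hpr.2)).ne'
  obtain ⟨⟨Δ₀, u₀⟩, hp₀, hmax⟩ := hKc.exists_isMaxOn hKne hφcont
  have hu₀ne : u₀ ≠ 0 := hsphne u₀ hp₀.2
  set ρ : ℝ := N ((Δ₀ * B) *ᵥ u₀) / N u₀ with hρdef
  have hρlt : ρ < 1 := (div_lt_one (hNpos u₀ hu₀ne)).mpr (hstrict Δ₀ hp₀.1 u₀ hu₀ne)
  have hρ0 : 0 ≤ ρ := div_nonneg (hN0 _) (hN0 _)
  -- uniform contraction
  have hcontr : ∀ Δ ∈ C0, ∀ e : Fin n_x → ℝ, N ((Δ * B) *ᵥ e) ≤ ρ * N e := by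
    intro Δ hΔ e
    rcases eq_or_ne e 0 with rfl | he
    · rw [Matrix.mulVec_zero]
      have hN00 : N 0 = 0 := by rw [hNdef]; simp
      rw [hN00, mul_zero]
    · have hnv : (0:ℝ) < ‖e‖ := norm_pos_iff.mpr he
      set u : Fin n_x → ℝ := ‖e‖⁻¹ • e with hudef
      have hu : u ∈ sph := by
        rw [hsphdef, mem_sphere_zero_iff_norm, hudef, norm_smul]
        simp [abs_of_pos (inv_pos.mpr hnv), inv_mul_cancel₀ hnv.ne']
      have h1 := isMaxOn_iff.mp hmax (Δ, u) (Set.mk_mem_prod hΔ hu)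
      have h2 : N ((Δ * B) *ᵥ u) ≤ ρ * N u :=
        (div_le_iff₀ (hNpos u (hsphne u hu))).mp h1
      have he' : e = ‖e‖ • u := by
        rw [hudef, smul_smul, mul_inv_cancel₀ hnv.ne', one_smul]
      have hA1 : N ((Δ * B) *ᵥ e) = ‖e‖ * N ((Δ * B) *ᵥ u) := by
        have hsm : (Δ * B) *ᵥ e = ‖e‖ • ((Δ * B) *ᵥ u) := by
          conv_lhs => rw [he']
          rw [Matrix.mulVec_smul]
        rw [hsm, hNsmul, abs_of_nonneg (norm_nonneg e)]
      have hA2 : N e = ‖e‖ * N u := by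
        conv_lhs => rw [he']
        rw [hNsmul, abs_of_nonneg (norm_nonneg e)]
      rw [hA1, hA2]
      calc ‖e‖ * N ((Δ * B) *ᵥ u) ≤ ‖e‖ * (ρ * N u) :=
            mul_le_mul_of_nonneg_left h2 (norm_nonneg e)
        _ = ρ * (‖e‖ * N u) := by ring
  -- bound on V0
  obtain ⟨cV, hcV⟩ := hV0.exists_norm_le
  set Cv : ℝ := ‖L‖ * max cV 0 with hCvdef
  have hCv0 : 0 ≤ Cv := mul_nonneg (norm_nonneg _) (le_max_right _ _)
  have hNv : ∀ v ∈ V0, N v ≤ Cv := by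
    intro v hv
    calc N v ≤ ‖L‖ * ‖v‖ := L.le_opNorm v
      _ ≤ ‖L‖ * max cV 0 :=
        mul_le_mul_of_nonneg_left ((hcV v hv).trans (le_max_left _ _)) (norm_nonneg _)
  set R : ℝ := max (N e0) (Cv / (1 - ρ)) with hRdef
  have h1ρ : (0:ℝ) < 1 - ρ := by linarith
  have hCvR : Cv ≤ (1 - ρ) * R := by
    have h := le_max_right (N e0) (Cv / (1 - ρ))
    rw [div_le_iff₀ h1ρ] at h
    linarith
  -- inductive bound
  have hbound : ∀ i, ∀ e ∈ E i, N e ≤ R := by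
    intro i
    induction i with
    | zero =>
      intro e he
      rw [hE0, Set.mem_singleton_iff] at he
      subst he
      exact le_max_left _ _
    | succ i ih =>
      intro y hy
      rw [hEsucc] at hy
      obtain ⟨Δ, hΔ, e, he, v, hv, rfl⟩ := hy
      have h1 : Δ *ᵥ Sum.elim e (K *ᵥ e) = (Δ * B) *ᵥ e := by
        rw [← hBe, Matrix.mulVec_mulVec]
      have h2 : N (Δ *ᵥ Sum.elim e (K *ᵥ e) + v) ≤ N ((Δ * B) *ᵥ e) + N v := by
        rw [h1]; exact hNadd _ _
      have h3 := hcontr Δ hΔ e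
      have h4 := hNv v hv
      have h6 : ρ * N e ≤ ρ * R := mul_le_mul_of_nonneg_left (ih e he) hρ0
      have h7 : ρ * R + (1 - ρ) * R = R := by ring
      linarith
  -- conclusion
  obtain ⟨c0, hc0, hlb⟩ := quad_lb P hP
  refine ⟨{e | N e ≤ R}, ?_, fun i e he => hbound i e he⟩
  rw [isBounded_iff_forall_norm_le]
  refine ⟨Real.sqrt (R ^ 2 / c0), fun e he => ?_⟩
  have h1 : c0 * ‖e‖ ^ 2 ≤ N e ^ 2 := by rw [hN_sq]; exact hlb e
  have h2 : N e ^ 2 ≤ R ^ 2 := pow_le_pow_left₀ (hN0 e) he 2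
  have h3 : ‖e‖ ^ 2 ≤ R ^ 2 / c0 := by
    rw [le_div_iff₀ hc0]; linarith [h1, h2]
  calc ‖e‖ = Real.sqrt (‖e‖ ^ 2) := (Real.sqrt_sq (norm_nonneg e)).symm
    _ ≤ Real.sqrt (R ^ 2 / c0) := Real.sqrt_le_sqrt h3
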